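/- Let b be a fixed positive integer. For every positive integer d one has X_{bd}(Γ_{b,d}, id) ≤ 2b²d, where id is the identity permutation of [bd]×[bd]. Consequently X_{bN}(Γ_{b,N}, id)/(bN)² → 0 as N → ∞, i.e. the sequence (Γ_{b,N})_N satisfies condition (C2). -/

import Mathlib

open Filter

/-- `X_M(σ,τ) = |{(i,j,k) : σ(i,j) ∈ {τ(i,k), τ(k,j)}}|`. -/
def Xcnt (M : ℕ) (σ τ : Equiv.Perm (Fin M × Fin M)) : ℕ :=
  (Finset.univ.filter fun x : Fin M × Fin M × Fin M =>
    σ (x.1, x.2.1) = τ (x.1, x.2.2) ∨ σ (x.1, x.2.1) = τ (x.2.2, x.2.1)).card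

/-- Transposition of the inner (block) indices: `((α1,β1),(α2,β2)) ↦ ((α1,β2),(α2,β1))`. -/
def blockSwap (b d : ℕ) : Equiv.Perm ((Fin b × Fin d) × (Fin b × Fin d)) where
  toFun x := ((x.1.1, x.2.2), (x.2.1, x.1.2))
  invFun x := ((x.1.1, x.2.2), (x.2.1, x.1.2))
  left_inv _ := rfl
  right_inv _ := rfl

/-- The `(b,d)`-partial transpose `Γ_{b,d}`, via the identification
`Fin b × Fin d ≃ Fin (b*d)`, `(α,β) ↦ α·d + β` (the `0`-based version of `(α-1)d + β`). -/
def ptrans (b d : ℕ) : Equiv.Perm (Fin (b * d) × Fin (b * d)) :=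
  ((Equiv.prodCongr finProdFinEquiv.symm finProdFinEquiv.symm).trans (blockSwap b d)).trans
    (Equiv.prodCongr finProdFinEquiv finProdFinEquiv)

lemma ptrans_apply (b d : ℕ) (i j : Fin (b * d)) :
    ptrans b d (i, j) =
      (finProdFinEquiv ((finProdFinEquiv.symm i).1, (finProdFinEquiv.symm j).2),
       finProdFinEquiv ((finProdFinEquiv.symm j).1, (finProdFinEquiv.symm i).2)) := rfl

lemma key (b d : ℕ) :
    Xcnt (b * d) (ptrans b d) (Equiv.refl (Fin (b * d) × Fin (b * d))) ≤ 2 * b ^ 2 * d := by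
  classical
  set e := (finProdFinEquiv : Fin b × Fin d ≃ Fin (b * d)) with he
  have hcard : Fintype.card ((Fin b × Fin b × Fin d) × Bool) = 2 * b ^ 2 * d := by
    simp [Fintype.card_prod]; ring
  rw [Xcnt, ← hcard, ← Finset.card_univ]
  apply Finset.card_le_card_of_injOn
    (fun x => (((e.symm x.1).1, (e.symm x.2.1).1, (e.symm x.1).2),
      decide (ptrans b d (x.1, x.2.1) = (x.1, x.2.2))))
  · intro _ _; exact Finset.mem_univ _
  · intro x hx y hy hxy
    simp only [Finset.mem_coe, Finset.mem_filter, Finset.mem_univ, true_and,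
      Equiv.refl_apply] at hx hy
    simp only [Prod.mk.injEq, decide_eq_decide] at hxy
    obtain ⟨⟨h1, h2, h3⟩, hflag⟩ := hxy
    -- i components equal
    have hi : x.1 = y.1 := by
      have : e.symm x.1 = e.symm y.1 := Prod.ext h1 h3
      exact e.symm.injective this
    by_cases hc : ptrans b d (x.1, x.2.1) = (x.1, x.2.2)
    · have hcy : ptrans b d (y.1, y.2.1) = (y.1, y.2.2) := hflag.mp hc
      -- case 1 analysis for x
      have hxB : (e.symm x.2.1).2 = (e.symm x.1).2 := by
        have := congrArg Prod.fst hc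
        rw [ptrans_apply] at this
        have h' : ((e.symm x.1).1, (e.symm x.2.1).2) = e.symm x.1 := by
          have := congrArg e.symm this; exact (e.symm_apply_apply _).symm.trans this
        exact (Prod.ext_iff.mp h').2
      have hyB : (e.symm y.2.1).2 = (e.symm y.1).2 := by
        have := congrArg Prod.fst hcy
        rw [ptrans_apply] at this
        have h' : ((e.symm y.1).1, (e.symm y.2.1).2) = e.symm y.1 := by
          have := congrArg e.symm this; exact (e.symm_apply_apply _).symm.trans this
        exact (Prod.ext_iff.mp h').2
      have hj : x.2.1 = y.2.1 := by
        apply e.symm.injective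
        apply Prod.ext h2
        rw [hxB, hyB, h3]
      have hk : x.2.2 = y.2.2 := by
        have hx2 := congrArg Prod.snd hc
        have hy2 := congrArg Prod.snd hcy
        rw [ptrans_apply] at hx2 hy2
        simp only [← he] at hx2 hy2
        rw [← hx2, ← hy2]
        exact congrArg e (Prod.ext h2 h3)
      exact Prod.ext hi (Prod.ext hj hk)
    · have hcy : ¬ ptrans b d (y.1, y.2.1) = (y.1, y.2.2) := fun h => hc (hflag.mpr h)
      have hc2 : ptrans b d (x.1, x.2.1) = (x.2.2, x.2.1) := (Finset.mem_filter.mp hx).2.resolve_left hc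
      have hcy2 : ptrans b d (y.1, y.2.1) = (y.2.2, y.2.1) := (Finset.mem_filter.mp hy).2.resolve_left hcy
      -- case 2: second component gives B1 = B2
      have hxB : (e.symm x.1).2 = (e.symm x.2.1).2 := by
        have := congrArg Prod.snd hc2
        rw [ptrans_apply] at this
        have h' : ((e.symm x.2.1).1, (e.symm x.1).2) = e.symm x.2.1 := by
          have := congrArg e.symm this; exact (e.symm_apply_apply _).symm.trans this
        exact (Prod.ext_iff.mp h').2
      have hyB : (e.symm y.1).2 = (e.symm y.2.1).2 := by
        have := congrArg Prod.snd hcy2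
        rw [ptrans_apply] at this
        have h' : ((e.symm y.2.1).1, (e.symm y.1).2) = e.symm y.2.1 := by
          have := congrArg e.symm this; exact (e.symm_apply_apply _).symm.trans this
        exact (Prod.ext_iff.mp h').2
      have hj : x.2.1 = y.2.1 := by
        apply e.symm.injective
        apply Prod.ext h2
        rw [← hxB, ← hyB, h3]
      have hk : x.2.2 = y.2.2 := by
        have hx2 := congrArg Prod.fst hc2
        have hy2 := congrArg Prod.fst hcy2
        rw [ptrans_apply] at hx2 hy2
        simp only [← he] at hx2 hy2
        rw [← hx2, ← hy2]
        exact congrArg e (Prod.ext h1 (by rw [← hxB, ← hyB, h3]))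
      exact Prod.ext hi (Prod.ext hj hk)

/-- For fixed `b`, `X_{bd}(Γ_{b,d}, id) ≤ 2b²d`, so `(Γ_{b,N})_N` satisfies condition (C2). -/
theorem stmt15 (b : ℕ) (hb : 0 < b) :
    (∀ d : ℕ, 0 < d →
      Xcnt (b * d) (ptrans b d) (Equiv.refl (Fin (b * d) × Fin (b * d))) ≤ 2 * b ^ 2 * d) ∧
    Tendsto (fun N : ℕ =>
        (Xcnt (b * N) (ptrans b N) (Equiv.refl (Fin (b * N) × Fin (b * N))) : ℝ) /
          ((b : ℝ) * (N : ℝ)) ^ 2) atTop (nhds 0) := by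
  refine ⟨fun d _ => key b d, ?_⟩
  apply squeeze_zero' (g := fun N : ℕ => (2 : ℝ) / N)
  · filter_upwards with N
    positivity
  · filter_upwards [eventually_ge_atTop 1] with N hN
    have hN0 : (0 : ℝ) < N := by exact_mod_cast hN
    have hb0 : (0 : ℝ) < b := by exact_mod_cast hb
    rw [div_le_div_iff₀ (by positivity) hN0]
    have hX : (Xcnt (b * N) (ptrans b N) (Equiv.refl (Fin (b * N) × Fin (b * N))) : ℝ)
        ≤ 2 * (b : ℝ) ^ 2 * N := by exact_mod_cast key b N
    nlinarith
  · exact tendsto_const_div_atTop_nhds_zero_nat 2
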